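/- Let H/F be an extension of number fields (or more generally fields of characteristic zero) with F totally real, and suppose H is generated over F by elements α_s (s ranging over a set S) such that for each s, the product α_s · c(α_s) lies in F, where c is an automorphism of H over F of order at most 2 acting as complex conjugation. Suppose moreover there is a character ε : S → Hˣ of finite order m with α_s² = α_s·c(α_s)·ε(s). Then H is contained in the field obtained from F by adjoining the square roots of the elements α_s·c(α_s) together with a primitive 2m-th root of unity; in particular H/F is abelian. -/

import Mathlib

open Polynomial IntermediateField

-- finite generation auxiliary
lemma aux_finset {F H S : Type*} [Field F] [Field H] [Algebra F H] [FiniteDimensional F H]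
    (α : S → H) (hgen : Algebra.adjoin F (Set.range α) = ⊤) :
    ∃ u : Finset S, Algebra.adjoin F (α '' ↑u) = ⊤ := by
  classical
  obtain ⟨t, ht⟩ := (⊤ : Subalgebra F H).fg_of_noetherian
  set Kfam : Finset S → Subalgebra F H := fun u => Algebra.adjoin F (α '' ↑u) with hKfam
  have dir : Directed (· ≤ ·) Kfam := fun u v =>
    ⟨u ∪ v, Algebra.adjoin_mono (Set.image_mono (by intro x hx; simp [hx])),
      Algebra.adjoin_mono (Set.image_mono (by intro x hx; simp [hx]))⟩
  have h1 : Algebra.adjoin F (Set.range α) ≤ ⨆ w, Kfam w :=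
    Algebra.adjoin_le (by
      rintro _ ⟨s, rfl⟩
      exact SetLike.le_def.mp (le_iSup Kfam {s})
        (Algebra.subset_adjoin ⟨s, by simp⟩))
  have hsup : (⨆ w, Kfam w) = ⊤ := le_antisymm le_top (hgen ▸ h1)
  have hmem : ∀ y ∈ t, ∃ w : Finset S, y ∈ Kfam w := by
    intro y hy
    have hy2 : y ∈ (⨆ w, Kfam w : Subalgebra F H) := hsup.symm ▸ Algebra.mem_top
    have hy3 : y ∈ ⋃ w, (Kfam w : Set H) := by
      rw [← Subalgebra.coe_iSup_of_directed dir]; exact hy2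
    simpa using hy3
  choose uf huf using hmem
  refine ⟨t.attach.sup (fun y => uf y.1 y.2), le_antisymm le_top ?_⟩
  rw [← ht]
  refine Algebra.adjoin_le fun y hy => ?_
  have hy' : y ∈ t := Finset.mem_coe.mp hy
  refine SetLike.le_def.mp (Algebra.adjoin_mono (Set.image_mono ?_)) (huf y hy')
  exact_mod_cast Finset.le_sup (f := fun z : {x // x ∈ t} => uf z.1 z.2) (t.mem_attach ⟨y, hy'⟩)

set_option maxHeartbeats 1000000 in
set_option synthInstance.maxHeartbeats 400000 in
/-- Let `H/F` be a finite extension with `F` a totally real number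
field.  Suppose `H` is generated over `F` by elements `α_s` (`s ∈ S`), `c` is an
automorphism of `H/F` of order at most 2 ("complex conjugation") with
`α_s · c(α_s) ∈ F`, and `ε : S → Hˣ` takes values that are `m`-th roots of unity with
`α_s² = α_s · c(α_s) · ε(s)`.  Then (the image of) `H` is contained in the field obtained
from `F` by adjoining the square roots of the `α_s · c(α_s)` together with a primitive
`2m`-th root of unity; in particular `H/F` is abelian. -/
theorem center_extension_abelian
    (F H : Type*) [Field F] [Field H] [Algebra F H] [FiniteDimensional F H]
    [NumberField F]
    (hreal : ∀ (φ : F →+* ℂ) (x : F), (starRingEnd ℂ) (φ x) = φ x)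
    (S : Type*) (α : S → Hˣ)
    (c : H ≃ₐ[F] H) (hc : ∀ x : H, c (c x) = x)
    (hαc : ∀ s : S, (α s : H) * c (α s) ∈ (algebraMap F H).range)
    (m : ℕ) (hm : 0 < m) (ε : S → Hˣ) (hε : ∀ s : S, (ε s) ^ m = 1)
    (hsq : ∀ s : S, (α s : H) ^ 2 = (α s : H) * c (α s) * (ε s : H))
    (hgen : Algebra.adjoin F (Set.range fun s => (α s : H)) = ⊤)
    (Ω : Type*) [Field Ω] [Algebra F Ω] [Algebra H Ω] [IsScalarTower F H Ω]
    (ζ : Ω) (hζ : IsPrimitiveRoot ζ (2 * m))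
    (hsqrt : ∀ s : S, ∃ x : Ω, x ^ 2 = algebraMap H Ω ((α s : H) * c (α s))) :
    (∀ h : H, algebraMap H Ω h ∈
        IntermediateField.adjoin F
          (insert ζ {x : Ω | ∃ s : S, x ^ 2 = algebraMap H Ω ((α s : H) * c (α s))})) ∧
    IsGalois F H ∧ (∀ σ τ : H ≃ₐ[F] H, σ * τ = τ * σ) := by
  classical
  haveI : NeZero m := ⟨hm.ne'⟩
  haveI : NeZero (2 * m) := ⟨by omega⟩
  choose x hx using hsqrt
  choose b hb using hαc
  -- the key computation
  have hζ2 : IsPrimitiveRoot (ζ ^ 2) m := hζ.pow (by positivity) rfl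
  have key : ∀ s : S, ∃ k : ℕ, algebraMap H Ω (α s) = x s * ζ ^ k ∨
      algebraMap H Ω (α s) = -(x s * ζ ^ k) := by
    intro s
    have hεm : (algebraMap H Ω (ε s)) ^ m = 1 := by
      rw [← map_pow, ← Units.val_pow_eq_pow_val, hε s, Units.val_one, map_one]
    obtain ⟨k, -, hk⟩ := hζ2.eq_pow_of_pow_eq_one hεm
    refine ⟨k, ?_⟩
    have hsq' : (algebraMap H Ω (α s)) ^ 2 = (x s * ζ ^ k) ^ 2 := by
      rw [← map_pow, hsq s, map_mul, ← hx s, mul_pow, ← pow_mul, mul_comm k 2, pow_mul, hk]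
    rw [pow_two, pow_two] at hsq'
    exact mul_self_eq_mul_self_iff.mp hsq'
  -- Part 1
  have part1 : ∀ h : H, algebraMap H Ω h ∈
      IntermediateField.adjoin F
        (insert ζ {y : Ω | ∃ s : S, y ^ 2 = algebraMap H Ω ((α s : H) * c (α s))}) := by
    set L := IntermediateField.adjoin F
        (insert ζ {y : Ω | ∃ s : S, y ^ 2 = algebraMap H Ω ((α s : H) * c (α s))}) with hL
    have hζL : ζ ∈ L := subset_adjoin F _ (Set.mem_insert _ _)
    have hmemL : ∀ s : S, algebraMap H Ω (α s) ∈ L := by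
      intro s
      have hxL : x s ∈ L := subset_adjoin F _ (Set.mem_insert_iff.mpr (Or.inr ⟨s, hx s⟩))
      obtain ⟨k, hk | hk⟩ := key s
      · rw [hk]; exact mul_mem hxL (pow_mem hζL k)
      · rw [hk]; exact neg_mem (mul_mem hxL (pow_mem hζL k))
    intro h
    have h1 : Algebra.adjoin F (Set.range fun s => (α s : H)) ≤
        L.toSubalgebra.comap (IsScalarTower.toAlgHom F H Ω) :=
      Algebra.adjoin_le (by rintro _ ⟨s, rfl⟩; exact hmemL s)
    have hh : h ∈ Algebra.adjoin F (Set.range fun s => (α s : H)) := hgen.symm ▸ Algebra.mem_top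
    exact h1 hh
  refine ⟨part1, ?_⟩
  -- Parts 2 and 3
  obtain ⟨u, hu⟩ := aux_finset (fun s => (α s : H)) hgen
  set p₀ : F[X] := X ^ (2 * m) - C 1 with hp₀
  set q : S → F[X] := fun s => X ^ 2 - C (b s) with hq
  have hp₀ne : p₀ ≠ 0 := X_pow_sub_C_ne_zero (by positivity) 1
  have hqne : ∀ s, q s ≠ 0 := fun s => X_pow_sub_C_ne_zero (by norm_num) (b s)
  have hxF : ∀ s, algebraMap F Ω (b s) = (x s) ^ 2 := fun s => by
    rw [IsScalarTower.algebraMap_apply F H Ω, hb s, hx s]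
  have hsplit₀ : (p₀.map (algebraMap F Ω)).Splits := by
    have hmap : p₀.map (algebraMap F Ω) = X ^ (2 * m) - C (1 : Ω) := by
      simp [hp₀]
    rw [hmap]
    exact X_pow_sub_one_splits hζ
  have hsplitq : ∀ s, ((q s).map (algebraMap F Ω)).Splits := by
    intro s
    have hmap : (q s).map (algebraMap F Ω) = (X - C (x s)) * (X + C (x s)) := by
      have h2 : (X - C (x s)) * (X + C (x s)) = X ^ 2 - C (x s) ^ 2 := by ring
      rw [h2]
      simp [hq, hxF s]
    rw [hmap]
    refine (Splits.X_sub_C _).mul ?_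
    rw [← sub_neg_eq_add, ← map_neg]
    exact Splits.X_sub_C _
  set Knice : IntermediateField F Ω :=
    adjoin F (p₀.rootSet Ω) ⊔ ⨆ s : u, adjoin F ((q s.1).rootSet Ω) with hKn
  haveI i1 : IsSplittingField F (adjoin F (p₀.rootSet Ω)) p₀ :=
    adjoin_rootSet_isSplittingField hsplit₀
  haveI i2 : ∀ s : u, IsSplittingField F (adjoin F ((q s.1).rootSet Ω)) (q s.1) :=
    fun s => adjoin_rootSet_isSplittingField (hsplitq s.1)
  haveI : ∀ s : u, NoZeroSMulDivisors F (adjoin F ((q s.1).rootSet Ω)) :=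
    fun s => inferInstance
  haveI : FiniteDimensional F (adjoin F (p₀.rootSet Ω)) :=
    IsSplittingField.finiteDimensional _ p₀
  haveI : ∀ s : u, FiniteDimensional F (adjoin F ((q s.1).rootSet Ω)) :=
    fun s => IsSplittingField.finiteDimensional _ (q s.1)
  haveI : Normal F (adjoin F (p₀.rootSet Ω)) := Normal.of_isSplittingField p₀
  haveI : ∀ s : u, Normal F (adjoin F ((q s.1).rootSet Ω)) :=
    fun s => Normal.of_isSplittingField (q s.1)
  haveI hFD : FiniteDimensional F Knice := by rw [hKn]; infer_instance
  haveI hGalK : IsGalois F Knice := by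
    rw [hKn]
    haveI hn : Normal F ↥(adjoin F (p₀.rootSet Ω) ⊔ ⨆ s : u, adjoin F ((q s.1).rootSet Ω)) :=
      inferInstance
    haveI hs : Algebra.IsSeparable F
        ↥(adjoin F (p₀.rootSet Ω) ⊔ ⨆ s : u, adjoin F ((q s.1).rootSet Ω)) := inferInstance
    exact ⟨⟩
  have hζroot : ζ ∈ p₀.rootSet Ω := by
    rw [mem_rootSet]
    exact ⟨hp₀ne, by simp [hp₀, hζ.pow_eq_one]⟩
  have hζKn : ζ ∈ Knice := by
    have hle : adjoin F (p₀.rootSet Ω) ≤ Knice := by rw [hKn]; exact le_sup_left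
    exact hle (subset_adjoin F _ hζroot)
  have hxroot : ∀ s : S, x s ∈ (q s).rootSet Ω := by
    intro s
    rw [mem_rootSet]
    exact ⟨hqne s, by simp [hq, hxF s]⟩
  have hxKn : ∀ s ∈ u, x s ∈ Knice := by
    intro s hs
    have hle : adjoin F ((q s).rootSet Ω) ≤ Knice := by
      rw [hKn]
      exact le_trans (le_iSup (fun t : u => adjoin F ((q t.1).rootSet Ω)) ⟨s, hs⟩) le_sup_right
    exact hle (subset_adjoin F _ (hxroot s))
  have hmemKn : ∀ s ∈ u, algebraMap H Ω (α s) ∈ Knice := by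
    intro s hs
    obtain ⟨k, hk | hk⟩ := key s
    · rw [hk]; exact mul_mem (hxKn s hs) (pow_mem hζKn k)
    · rw [hk]; exact neg_mem (mul_mem (hxKn s hs) (pow_mem hζKn k))
  have hrangeKn : ∀ h : H, algebraMap H Ω h ∈ Knice := by
    intro h
    have h1 : Algebra.adjoin F ((fun s => (α s : H)) '' ↑u) ≤
        Knice.toSubalgebra.comap (IsScalarTower.toAlgHom F H Ω) :=
      Algebra.adjoin_le (by rintro _ ⟨s, hs, rfl⟩; exact hmemKn s hs)
    exact h1 (hu.symm ▸ Algebra.mem_top)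
  set Hf : IntermediateField F Ω := (IsScalarTower.toAlgHom F H Ω).fieldRange with hHf
  have eH : H ≃ₐ[F] ↥Hf := show _ from AlgEquiv.ofInjectiveField (IsScalarTower.toAlgHom F H Ω)
  have hle : Hf ≤ Knice := by
    rintro y ⟨h0, rfl⟩
    exact hrangeKn h0
  set E' : IntermediateField F ↥Knice := IntermediateField.restrict hle with hE'
  have e : H ≃ₐ[F] ↥E' := eH.trans (IntermediateField.restrict_algEquiv hle)
  have hSeq : Knice = adjoin F (p₀.rootSet Ω ∪ ⋃ s : u, ((q s.1).rootSet Ω)) := by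
    rw [hKn, IntermediateField.adjoin_union, IntermediateField.adjoin_iUnion]
  set ζ' : Knice := ⟨ζ, hζKn⟩ with hζ'def
  have hζ'p : IsPrimitiveRoot ζ' (2 * m) := by
    refine IsPrimitiveRoot.of_map_of_injective (f := algebraMap Knice Ω) ?_
      (algebraMap Knice Ω).injective
    exact hζ
  have comm : ∀ σ τ : Knice ≃ₐ[F] Knice, σ * τ = τ * σ := by
    intro σ τ
    obtain ⟨a, -, ha⟩ := hζ'p.eq_pow_of_pow_eq_one (ξ := σ ζ')
      (by rw [← map_pow, hζ'p.pow_eq_one, map_one])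
    obtain ⟨a', -, ha'⟩ := hζ'p.eq_pow_of_pow_eq_one (ξ := τ ζ')
      (by rw [← map_pow, hζ'p.pow_eq_one, map_one])
    have case1 : ∀ r' : Knice, r' ^ (2 * m) = 1 → σ (τ r') = τ (σ r') := by
      intro r' hr'
      obtain ⟨i, -, hi⟩ := hζ'p.eq_pow_of_pow_eq_one hr'
      have hgen2 : ∀ (ρ1 ρ2 : ↥Knice ≃ₐ[F] ↥Knice) (a1 a2 : ℕ), ζ' ^ a1 = ρ1 ζ' →
          ζ' ^ a2 = ρ2 ζ' → ρ1 (ρ2 (ζ' ^ i)) = ζ' ^ (a1 * (a2 * i)) := by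
        intro ρ1 ρ2 a1 a2 h1 h2
        rw [map_pow, ← h2, ← pow_mul, map_pow, ← h1, ← pow_mul]
      rw [← hi, hgen2 σ τ a a' ha ha', hgen2 τ σ a' a ha' ha]
      congr 1
      ring
    have case2 : ∀ (r' : Knice) (s : S), (r' : Ω) ^ 2 = algebraMap F Ω (b s) →
        σ (τ r') = τ (σ r') := by
      intro r' s hr'
      have hr2 : r' * r' = algebraMap F Knice (b s) := by
        apply Subtype.ext
        push_cast
        rw [← pow_two, hr', IsScalarTower.algebraMap_apply F Knice Ω]
      have hsign : ∀ ρ : Knice ≃ₐ[F] Knice, ρ r' = r' ∨ ρ r' = -r' := fun ρ =>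
        mul_self_eq_mul_self_iff.mp (by rw [← map_mul, hr2, AlgEquiv.commutes])
      rcases hsign σ with h1 | h1 <;> rcases hsign τ with h2 | h2 <;>
        rw [h2, h1] <;> simp [h1, h2]
    have hext : (σ * τ).toAlgHom = (τ * σ).toAlgHom := by
      apply IntermediateField.algHom_ext_of_eq_adjoin F hSeq
      intro r hr
      change σ (τ _) = τ (σ _)
      rcases hr with hrA | hrB
      · refine case1 _ ?_
        apply Subtype.ext
        push_cast
        have h0 := (mem_rootSet.mp hrA).2
        have h1 : aeval r p₀ = r ^ (2 * m) - 1 := by simp [hp₀]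
        rw [h1] at h0
        exact sub_eq_zero.mp h0
      · obtain ⟨s, hrs⟩ := Set.mem_iUnion.mp hrB
        refine case2 _ s.1 ?_
        have h0 := (mem_rootSet.mp hrs).2
        have h1 : aeval r (q s.1) = r ^ 2 - algebraMap F Ω (b s.1) := by simp [hq]
        rw [h1] at h0
        exact sub_eq_zero.mp h0
    exact AlgEquiv.ext fun z => by
      have := AlgHom.congr_fun hext z
      simpa using this
  haveI hNorm : (IntermediateField.fixingSubgroup E').Normal := by
    constructor
    intro n hn gg
    have hgn : gg * n * gg⁻¹ = n := by
      rw [comm gg n, mul_assoc, mul_inv_cancel, mul_one]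
    rw [hgn]; exact hn
  haveI hGalE' : IsGalois F ↥E' := by
    have h1 : IntermediateField.fixedField (IntermediateField.fixingSubgroup E') = E' :=
      IsGalois.fixedField_fixingSubgroup E'
    exact IsGalois.of_algEquiv (IntermediateField.equivOfEq h1)
  haveI hGalH : IsGalois F H := IsGalois.of_algEquiv e.symm
  refine ⟨hGalH, ?_⟩
  intro σ τ
  have hsurj := AlgEquiv.restrictNormalHom_surjective (F := F) (K₁ := ↥E') (E := ↥Knice)
  obtain ⟨σ₁, hσ₁⟩ := hsurj ((AlgEquiv.autCongr e) σ)
  obtain ⟨τ₁, hτ₁⟩ := hsurj ((AlgEquiv.autCongr e) τ)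
  apply (AlgEquiv.autCongr e).injective
  rw [map_mul, map_mul, ← hσ₁, ← hτ₁, ← map_mul, ← map_mul, comm σ₁ τ₁]
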